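/- For every β ∈ ℝ: f_β(1) = K_n·(cos(β/2)(1 + tan(π/(2n))) + i·sin(β/2)(1 − tan(π/(2n)))) and f_β(e^{iπ/n}) = e^{iπ/n}·K_n·(cos(β/2)(1 − tan(π/(2n))) + i·sin(β/2)(1 + tan(π/(2n)))). Consequently |f_β(1)|² = K_n²(sec²(π/(2n)) + 2 tan(π/(2n)) cos β) and |f_β(e^{iπ/n})|² = K_n²(sec²(π/(2n)) − 2 tan(π/(2n)) cos β). -/

import Mathlib

open Real

noncomputable def A (m : ℕ) : ℝ := (Nat.centralBinom m : ℝ) / 4 ^ m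

noncomputable def c (n m : ℕ) : ℝ := A m / (2 * m * n + 1)

noncomputable def d (n m : ℕ) : ℝ := A m * ((n : ℝ) - 1) / ((n : ℝ) * (2 * m + 1) - 1)

noncomputable def H (n : ℕ) (z : ℂ) : ℂ := ∑' m : ℕ, (c n m : ℂ) * z ^ m

noncomputable def G (n : ℕ) (z : ℂ) : ℂ := ∑' m : ℕ, (d n m : ℂ) * z ^ m

noncomputable def hh (n : ℕ) (z : ℂ) : ℂ := ∑' m : ℕ, (c n m : ℂ) * z ^ (2 * m * n + 1)

noncomputable def gg (n : ℕ) (z : ℂ) : ℂ :=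
  (1 / ((n : ℂ) - 1)) * ∑' m : ℕ, (d n m : ℂ) * z ^ (2 * m * n + n - 1)

noncomputable def f (n : ℕ) (β : ℝ) (z : ℂ) : ℂ :=
  Complex.exp (Complex.I * β / 2) * hh n z +
    Complex.exp (-(Complex.I * β / 2)) * (starRingEnd ℂ) (gg n z)

noncomputable def K (n : ℕ) : ℝ :=
  Real.sqrt π * Real.Gamma (1 + 1 / (2 * n)) / Real.Gamma (1 / 2 + 1 / (2 * n))


section aux
open Finset MeasureTheory

lemma A_pos (m : ℕ) : 0 < A m := by
  unfold A
  have := Nat.centralBinom_pos m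
  positivity

lemma A_zero : A 0 = 1 := by simp [A, Nat.centralBinom]

lemma A_rec (m : ℕ) : A (m + 1) * (2 * m + 2) = A m * (2 * m + 1) := by
  have h := congrArg (Nat.cast : ℕ → ℝ) (Nat.succ_mul_centralBinom_succ m)
  push_cast at h
  unfold A
  have h4 : (4 : ℝ) ^ (m + 1) = 4 * 4 ^ m := by ring
  rw [h4]
  have hp : (0:ℝ) < 4 ^ m := by positivity
  field_simp
  nlinarith [h]

lemma A_le_one (m : ℕ) : A m ≤ 1 := by
  induction m with
  | zero => simp [A_zero]
  | succ k ih =>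
    have h := A_rec k
    have hk : (0:ℝ) < 2 * k + 2 := by positivity
    nlinarith [A_pos k, A_pos (k+1)]

lemma A_sq (m : ℕ) : A m ^ 2 * (2 * m + 1) ≤ 1 := by
  induction m with
  | zero => simp [A_zero]
  | succ k ih =>
    have h := A_rec k
    have hk : (0:ℝ) < 2 * k + 2 := by positivity
    have key : A (k+1) ^ 2 * (2 * (k+1) + 1) ≤ A k ^ 2 * (2 * k + 1) := by
      have e : A (k+1) = A k * (2 * k + 1) / (2 * k + 2) := by
        field_simp at h ⊢; linarith
      rw [e]
      rw [div_pow, div_mul_eq_mul_div, div_le_iff₀ (by positivity)]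
      have : (2*(k:ℝ)+1) * (2*k+3) ≤ (2*k+2)^2 := by push_cast; ring_nf; nlinarith
      push_cast
      nlinarith [sq_nonneg (A k), A_pos k, sq_nonneg (A k * (2*(k:ℝ)+1))]
    calc A (k+1) ^ 2 * (2 * ↑(k+1) + 1) = A (k+1) ^ 2 * (2 * (k+1) + 1) := by push_cast; ring
    _ ≤ A k ^ 2 * (2 * k + 1) := key
    _ ≤ 1 := ih

lemma conv_step (n : ℕ) :
    ∑ k ∈ Finset.range (n+2), A k * A (n+1-k) = ∑ k ∈ Finset.range (n+1), A k * A (n-k) := by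
  set T0 : ℝ := ∑ k ∈ Finset.range (n+1), A k * A (n-k) with hT0
  set T1 : ℝ := ∑ k ∈ Finset.range (n+2), A k * A (n+1-k) with hT1
  set S1 : ℝ := ∑ k ∈ Finset.range (n+1), (2*(k:ℝ)+1) * (A k * A (n-k)) with hS1
  set S2 : ℝ := ∑ k ∈ Finset.range (n+2), (2*(k:ℝ)) * (A k * A (n+1-k)) with hS2
  have h1 : 2 * S1 = (2*(n:ℝ)+2) * T0 := by
    have hrefl : S1 = ∑ k ∈ Finset.range (n+1), (2*((n:ℝ)-k)+1) * (A k * A (n-k)) := by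
      rw [hS1, ← Finset.sum_range_reflect]
      apply Finset.sum_congr rfl
      intro j hj
      have hj' : j ≤ n := by simpa [Nat.lt_succ_iff] using hj
      have e1 : n + 1 - 1 - j = n - j := by omega
      have h2 : n - (n - j) = j := Nat.sub_sub_self hj'
      rw [e1, h2, Nat.cast_sub hj']
      ring
    calc 2 * S1 = S1 + S1 := by ring
    _ = ∑ k ∈ Finset.range (n+1), ((2*(k:ℝ)+1) * (A k * A (n-k)) + (2*((n:ℝ)-k)+1) * (A k * A (n-k))) := by
        rw [Finset.sum_add_distrib, ← hrefl]
    _ = ∑ k ∈ Finset.range (n+1), (2*(n:ℝ)+2) * (A k * A (n-k)) := by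
        apply Finset.sum_congr rfl; intro j hj; ring
    _ = (2*(n:ℝ)+2) * T0 := by rw [hT0, Finset.mul_sum]
  have h2 : 2 * S2 = (2*(n:ℝ)+2) * T1 := by
    have hrefl : S2 = ∑ k ∈ Finset.range (n+2), (2*((n:ℝ)+1-k)) * (A k * A (n+1-k)) := by
      rw [hS2, ← Finset.sum_range_reflect]
      apply Finset.sum_congr rfl
      intro j hj
      have hj' : j ≤ n+1 := by simpa [Nat.lt_succ_iff] using hj
      have e1 : n + 2 - 1 - j = n + 1 - j := by omega
      have h2 : n + 1 - (n + 1 - j) = j := Nat.sub_sub_self hj'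
      rw [e1, h2, Nat.cast_sub hj']
      push_cast; ring
    calc 2 * S2 = S2 + S2 := by ring
    _ = ∑ k ∈ Finset.range (n+2), ((2*(k:ℝ)) * (A k * A (n+1-k)) + (2*((n:ℝ)+1-k)) * (A k * A (n+1-k))) := by
        rw [Finset.sum_add_distrib, ← hrefl]
    _ = ∑ k ∈ Finset.range (n+2), (2*(n:ℝ)+2) * (A k * A (n+1-k)) := by
        apply Finset.sum_congr rfl; intro j hj; ring
    _ = (2*(n:ℝ)+2) * T1 := by rw [hT1, Finset.mul_sum]
  have h3 : S1 = S2 := by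
    have : S2 = ∑ i ∈ Finset.range (n+1), (2*((i:ℝ)+1)) * (A (i+1) * A (n-i)) := by
      rw [hS2, Finset.sum_range_succ']
      simp only [Nat.cast_zero, mul_zero, zero_mul, add_zero]
      apply Finset.sum_congr rfl
      intro j hj
      have : n + 1 - (j + 1) = n - j := by omega
      rw [this]
      push_cast; ring
    rw [this, hS1]
    apply Finset.sum_congr rfl
    intro j hj
    have hr := A_rec j
    linear_combination A (n - j) * hr.symm
  have hne : (2*(n:ℝ)+2) ≠ 0 := by positivity
  have : (2*(n:ℝ)+2) * T1 = (2*(n:ℝ)+2) * T0 := by rw [← h1, ← h2, h3]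
  exact mul_left_cancel₀ hne this

lemma conv (n : ℕ) : ∑ k ∈ Finset.range (n+1), A k * A (n-k) = 1 := by
  induction n with
  | zero => simp [A_zero]
  | succ k ih => rw [conv_step k, ih]

lemma summable_gen {x : ℝ} (hx0 : 0 ≤ x) (hx1 : x < 1) :
    Summable (fun m => A m * x ^ m) := by
  apply Summable.of_nonneg_of_le (fun m => mul_nonneg (A_pos m).le (pow_nonneg hx0 m))
    (fun m => ?_) (summable_geometric_of_lt_one hx0 hx1)
  calc A m * x ^ m ≤ 1 * x ^ m := by
        apply mul_le_mul_of_nonneg_right (A_le_one m) (pow_nonneg hx0 m)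
  _ = x ^ m := one_mul _

lemma hasSum_gen {x : ℝ} (hx0 : 0 ≤ x) (hx1 : x < 1) :
    HasSum (fun m => A m * x ^ m) ((1 - x) ^ (-(1/2) : ℝ)) := by
  have hs := summable_gen hx0 hx1
  have hnorm : Summable fun m => ‖A m * x ^ m‖ := by
    apply hs.congr
    intro m
    exact (Real.norm_of_nonneg (mul_nonneg (A_pos m).le (pow_nonneg hx0 m))).symm
  set F : ℝ := ∑' m, A m * x ^ m with hF
  have hsq : F * F = (1 - x)⁻¹ := by
    rw [hF, tsum_mul_tsum_eq_tsum_sum_range_of_summable_norm hnorm hnorm]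
    have : ∀ n : ℕ, ∑ k ∈ Finset.range (n+1), (A k * x ^ k) * (A (n-k) * x ^ (n-k)) = x ^ n := by
      intro n
      have : ∀ k ∈ Finset.range (n+1), (A k * x ^ k) * (A (n-k) * x ^ (n-k))
          = (A k * A (n-k)) * x ^ n := by
        intro k hk
        have hk' : k ≤ n := by simpa [Nat.lt_succ_iff] using hk
        have : x ^ k * x ^ (n - k) = x ^ n := by
          rw [← pow_add, Nat.add_sub_cancel' hk']
        linear_combination (A k * A (n-k)) * this
      rw [Finset.sum_congr rfl this, ← Finset.sum_mul, conv n, one_mul]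
    rw [tsum_congr this, tsum_geometric_of_lt_one hx0 hx1]
  have h1x : (0:ℝ) < 1 - x := by linarith
  set y : ℝ := (1 - x) ^ (-(1/2) : ℝ) with hy
  have hyy : y * y = (1 - x)⁻¹ := by
    rw [hy, ← Real.rpow_add h1x]
    norm_num [Real.rpow_neg_one]
  have hypos : 0 < y := Real.rpow_pos_of_pos h1x _
  have hFnonneg : 0 ≤ F := tsum_nonneg (fun m => mul_nonneg (A_pos m).le (pow_nonneg hx0 m))
  have hFy : F = y := by
    have h := hsq.trans hyy.symm
    nlinarith [h, hypos, hFnonneg]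
  have := hs.hasSum
  rwa [← hF, hFy] at this

lemma summable_A_div {s : ℝ} (hs : 0 < s) : Summable (fun m : ℕ => A m / ((m : ℝ) + s)) := by
  rw [← summable_nat_add_iff 1]
  have hg : Summable (fun m : ℕ => ((m : ℝ) + 1) ^ (-(3/2) : ℝ)) := by
    have h := (Real.summable_nat_rpow (p := -(3/2))).2 (by norm_num)
    have h2 := (summable_nat_add_iff (f := fun n : ℕ => (n : ℝ) ^ (-(3/2) : ℝ)) 1).2 h
    apply h2.congr
    intro m
    push_cast
    ring_nf
  apply Summable.of_nonneg_of_le (fun m => ?_) (fun m => ?_) hg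
  · have := A_pos (m + 1)
    have : (0:ℝ) < (m:ℝ) + 1 + s := by positivity
    positivity
  · set x : ℝ := (m : ℝ) + 1 with hx
    have hx0 : (0:ℝ) < x := by positivity
    have hx1 : (1:ℝ) ≤ x := by simp [hx]
    have hA : A (m+1) ≤ x ^ (-(1/2) : ℝ) := by
      have h1 : A (m+1) ^ 2 ≤ 1 / x := by
        have h2 := A_sq (m+1)
        have h3 : x ≤ 2 * ((m:ℕ)+1 : ℝ) + 1 := by push_cast [hx]; linarith
        have h4 : (0:ℝ) < 2 * ((m:ℕ)+1 : ℝ) + 1 := by positivity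
        rw [le_div_iff₀ hx0]
        push_cast at h2 h3 ⊢
        nlinarith [sq_nonneg (A (m+1))]
      have h5 : A (m+1) ≤ Real.sqrt (1 / x) := by
        nlinarith [h1, Real.sq_sqrt (show (0:ℝ) ≤ 1/x by positivity),
          Real.sqrt_nonneg (1/x), (A_pos (m+1)).le]
      have h6 : x ^ (-(1/2) : ℝ) = Real.sqrt (1/x) := by
        rw [Real.sqrt_eq_rpow]
        simp only [one_div]
        rw [Real.inv_rpow hx0.le, ← Real.rpow_neg hx0.le]
      rw [h6]
      exact h5
    have hB : ((m:ℝ) + 1 + s)⁻¹ ≤ x ^ (-(1) : ℝ) := by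
      rw [Real.rpow_neg_one]
      apply inv_anti₀ hx0
      simp [hx]; linarith
    have hcast : A (m+1) / (((m+1:ℕ):ℝ)+s) = A (m+1) / ((m:ℝ)+1+s) := by push_cast; ring_nf
    rw [hcast]
    calc A (m+1) / ((m:ℝ)+1+s) = A (m+1) * ((m:ℝ)+1+s)⁻¹ := by rw [div_eq_mul_inv]
    _ ≤ x ^ (-(1/2) : ℝ) * x ^ (-(1) : ℝ) := by
        apply mul_le_mul hA hB (by positivity) (by positivity)
    _ = x ^ (-(3/2) : ℝ) := by rw [← Real.rpow_add hx0]; norm_num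

lemma key_sum {s : ℝ} (hs : 0 < s) (hs1 : s < 1) :
    ∑' m : ℕ, A m / ((m:ℝ) + s) = Real.Gamma s * Real.sqrt π / Real.Gamma (s + 1/2) := by
  have hexp : ∀ m : ℕ, (-1 : ℝ) < (m:ℝ) + s - 1 := by
    intro m
    have : (0:ℝ) ≤ m := Nat.cast_nonneg m
    linarith
  have hms : ∀ m : ℕ, (0:ℝ) < (m:ℝ) + s := fun m => by positivity
  -- each integral
  have hval : ∀ m : ℕ, ∫ u in Set.Ioc (0:ℝ) 1, A m * u ^ ((m:ℝ) + s - 1) = A m / ((m:ℝ) + s) := by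
    intro m
    rw [← intervalIntegral.integral_of_le zero_le_one, intervalIntegral.integral_const_mul,
      integral_rpow (Or.inl (hexp m))]
    have e : (m:ℝ) + s - 1 + 1 = (m:ℝ) + s := by ring
    rw [e, Real.one_rpow, Real.zero_rpow (hms m).ne']
    ring
  -- integrability
  have hInt : ∀ m : ℕ, IntegrableOn (fun u : ℝ => A m * u ^ ((m:ℝ) + s - 1)) (Set.Ioc 0 1) := by
    intro m
    rw [← intervalIntegrable_iff_integrableOn_Ioc_of_le zero_le_one]
    exact (intervalIntegral.intervalIntegrable_rpow' (hexp m)).const_mul _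
  -- norm integrals
  have hnormval : ∀ m : ℕ,
      ∫ u in Set.Ioc (0:ℝ) 1, ‖A m * u ^ ((m:ℝ) + s - 1)‖ = A m / ((m:ℝ) + s) := by
    intro m
    rw [← hval m]
    apply setIntegral_congr_fun measurableSet_Ioc
    intro u hu
    exact Real.norm_of_nonneg (mul_nonneg (A_pos m).le (Real.rpow_nonneg hu.1.le _))
  -- interchange
  have hswap := MeasureTheory.integral_tsum_of_summable_integral_norm
    (μ := volume.restrict (Set.Ioc (0:ℝ) 1))
    (F := fun (m : ℕ) (u : ℝ) => A m * u ^ ((m:ℝ) + s - 1))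
    (fun m => hInt m)
    (by
      apply ((summable_A_div hs).congr)
      intro m
      exact (hnormval m).symm)
  have hleft : ∑' m : ℕ, A m / ((m:ℝ) + s)
      = ∫ u in Set.Ioc (0:ℝ) 1, ∑' m : ℕ, A m * u ^ ((m:ℝ) + s - 1) := by
    rw [← hswap]
    exact tsum_congr fun m => (hval m).symm
  -- pointwise identification on Ioo
  have hpt : ∀ u ∈ Set.Ioo (0:ℝ) 1,
      ∑' m : ℕ, A m * u ^ ((m:ℝ) + s - 1) = u ^ (s - 1) * (1 - u) ^ (-(1/2) : ℝ) := by
    intro u hu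
    have hu0 : 0 < u := hu.1
    have hu1 : u < 1 := hu.2
    have hterm : ∀ m : ℕ, A m * u ^ ((m:ℝ) + s - 1) = (A m * u ^ m) * u ^ (s - 1) := by
      intro m
      have : ((m:ℝ) + s - 1) = (m:ℝ) + (s - 1) := by ring
      rw [this, Real.rpow_add hu0, Real.rpow_natCast]
      ring
    rw [tsum_congr hterm, tsum_mul_right, (hasSum_gen hu0.le hu1).tsum_eq]
    ring
  have hmid : ∫ u in Set.Ioc (0:ℝ) 1, ∑' m : ℕ, A m * u ^ ((m:ℝ) + s - 1)
      = ∫ u in (0:ℝ)..1, u ^ (s - 1) * (1 - u) ^ (-(1/2) : ℝ) := by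
    rw [MeasureTheory.integral_Ioc_eq_integral_Ioo,
      intervalIntegral.integral_of_le zero_le_one,
      MeasureTheory.integral_Ioc_eq_integral_Ioo]
    exact setIntegral_congr_fun measurableSet_Ioo hpt
  -- Beta integral evaluation
  have hbeta : Complex.betaIntegral (s : ℂ) (1/2 : ℂ)
      = ((∫ u in (0:ℝ)..1, u ^ (s - 1) * (1 - u) ^ (-(1/2) : ℝ) : ℝ) : ℂ) := by
    rw [Complex.betaIntegral, ← intervalIntegral.integral_ofReal]
    apply intervalIntegral.integral_congr
    intro x hx
    rw [Set.uIcc_of_le zero_le_one] at hx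
    have hx0 : (0:ℝ) ≤ x := hx.1
    have hx1 : x ≤ 1 := hx.2
    have e1 : ((x:ℂ)) ^ ((s:ℂ) - 1) = ((x ^ (s-1) : ℝ) : ℂ) := by
      rw [Complex.ofReal_cpow hx0]
      push_cast
      ring_nf
    have e2 : ((1:ℂ) - (x:ℂ)) ^ ((1/2:ℂ) - 1) = (((1-x) ^ (-(1/2):ℝ) : ℝ) : ℂ) := by
      have h1x : (0:ℝ) ≤ 1 - x := by linarith
      have : ((1:ℂ) - (x:ℂ)) = (((1-x : ℝ)) : ℂ) := by push_cast; ring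
      rw [this, Complex.ofReal_cpow h1x]
      push_cast
      norm_num
    show (x:ℂ) ^ ((s:ℂ) - 1) * ((1:ℂ) - (x:ℂ)) ^ ((1/2:ℂ) - 1)
        = ((x ^ (s-1) * (1-x) ^ (-(1/2):ℝ) : ℝ) : ℂ)
    rw [e1, e2]
    push_cast
    ring
  have hGpos : 0 < Real.Gamma (s + 1/2) := Real.Gamma_pos_of_pos (by linarith)
  have hgamma := Complex.Gamma_mul_Gamma_eq_betaIntegral
    (s := (s:ℂ)) (t := (1/2 : ℂ)) (by simpa using hs) (by norm_num)
  rw [hbeta] at hgamma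
  have e3 : ((s:ℂ) + 1/2) = (((s + 1/2 : ℝ)) : ℂ) := by push_cast; ring
  rw [e3, Complex.Gamma_ofReal, Complex.Gamma_ofReal] at hgamma
  have e4 : Complex.Gamma (1/2 : ℂ) = ((Real.Gamma (1/2 : ℝ) : ℝ) : ℂ) := by
    rw [← Complex.Gamma_ofReal]
    norm_num
  rw [e4] at hgamma
  have hgamma' : Real.Gamma s * Real.Gamma (1/2)
      = Real.Gamma (s + 1/2) * ∫ u in (0:ℝ)..1, u ^ (s - 1) * (1 - u) ^ (-(1/2) : ℝ) := by
    exact_mod_cast hgamma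
  have hintval : ∫ u in (0:ℝ)..1, u ^ (s - 1) * (1 - u) ^ (-(1/2) : ℝ)
      = Real.Gamma s * Real.sqrt π / Real.Gamma (s + 1/2) := by
    rw [← Real.Gamma_one_half_eq]
    field_simp at hgamma' ⊢
    linarith [hgamma']
  rw [hleft, hmid, hintval]

lemma sum_c {n : ℕ} (hn : 3 ≤ n) : ∑' m : ℕ, c n m = K n := by
  have hnR' : (3:ℝ) ≤ (n:ℝ) := by exact_mod_cast hn
  set x : ℝ := 1 / (2 * (n:ℝ)) with hx
  have hx0 : 0 < x := by rw [hx]; positivity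
  have hx1 : x < 1 := by
    rw [hx, div_lt_one (by linarith)]
    linarith
  have hn0 : (n:ℝ) ≠ 0 := by linarith
  have hc : ∀ m : ℕ, c n m = x * (A m / ((m:ℝ) + x)) := by
    intro m
    have h2 : ((m:ℝ) + x) ≠ 0 := by positivity
    have hden : 2 * (m:ℝ) * (n:ℝ) + 1 = (2 * (n:ℝ)) * ((m:ℝ) + x) := by
      rw [hx]; field_simp
    rw [c, hden, hx]
    rw [div_mul_eq_div_div]
    rw [show (1:ℝ) / (2 * (n:ℝ)) * (A m / ((m:ℝ) + 1 / (2 * (n:ℝ))))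
      = A m / (2 * (n:ℝ)) / ((m:ℝ) + 1 / (2 * (n:ℝ))) by ring]
  rw [tsum_congr hc, tsum_mul_left, key_sum hx0 hx1, K]
  have hG : Real.Gamma (1 + x) = x * Real.Gamma x := by
    rw [add_comm, Real.Gamma_add_one hx0.ne']
  rw [hG]
  rw [show x + 1/2 = 1/2 + x by ring]
  ring

lemma gamma_tan_identity {n : ℕ} (hn : 3 ≤ n) : (1 / (2 * (n:ℝ))) * (Real.Gamma (1/2 - 1/(2*(n:ℝ))) * Real.sqrt π
    / Real.Gamma ((1/2 - 1/(2*(n:ℝ))) + 1/2)) = K n * Real.tan (π / (2 * n)) := by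
  have hnR' : (3:ℝ) ≤ (n:ℝ) := by exact_mod_cast hn
  set x : ℝ := 1 / (2 * (n:ℝ)) with hx
  have hx0 : 0 < x := by rw [hx]; positivity
  have hx6 : x ≤ 1/6 := by
    rw [hx, div_le_div_iff₀ (by linarith) (by norm_num)]
    linarith
  have hpix0 : 0 < π * x := by positivity
  have hpix : π * x < π / 2 := by
    have := Real.pi_pos
    nlinarith
  have hsin : 0 < Real.sin (π * x) := Real.sin_pos_of_pos_of_lt_pi hpix0 (by nlinarith [Real.pi_pos])
  have hcos : 0 < Real.cos (π * x) := Real.cos_pos_of_mem_Ioo ⟨by linarith, hpix⟩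
  have hGx : 0 < Real.Gamma x := Real.Gamma_pos_of_pos hx0
  have hGh : 0 < Real.Gamma (1/2 + x) := Real.Gamma_pos_of_pos (by linarith)
  -- reflection identities
  have hrefl1 : Real.Gamma x * Real.Gamma (1 - x) = π / Real.sin (π * x) :=
    Real.Gamma_mul_Gamma_one_sub x
  have hrefl2 : Real.Gamma (1/2 + x) * Real.Gamma (1/2 - x) = π / Real.cos (π * x) := by
    have h := Real.Gamma_mul_Gamma_one_sub (1/2 + x)
    have e1 : 1 - (1/2 + x) = 1/2 - x := by ring
    have e2 : Real.sin (π * (1/2 + x)) = Real.cos (π * x) := by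
      rw [show π * (1/2 + x) = π/2 + π * x by ring, Real.sin_add]
      simp
    rw [e1, e2] at h
    exact h
  have hG1 : Real.Gamma (1 - x) = π / (Real.sin (π * x) * Real.Gamma x) := by
    field_simp at hrefl1 ⊢
    linarith [hrefl1]
  have hG2 : Real.Gamma (1/2 - x) = π / (Real.cos (π * x) * Real.Gamma (1/2 + x)) := by
    field_simp at hrefl2 ⊢
    linarith [hrefl2]
  have harg : (1/2 - x) + 1/2 = 1 - x := by ring
  rw [harg, hG1, hG2, K, Real.tan_eq_sin_div_cos]
  have hGadd : Real.Gamma (1 + x) = x * Real.Gamma x := by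
    rw [add_comm, Real.Gamma_add_one hx0.ne']
  have hpi : π / (2 * (n:ℝ)) = π * x := by rw [hx]; ring
  rw [hpi, ← hx, hGadd]
  have hpipos := Real.pi_pos
  field_simp

lemma sum_d {n : ℕ} (hn : 3 ≤ n) : ∑' m : ℕ, d n m = ((n:ℝ) - 1) * (K n * Real.tan (π / (2 * n))) := by
  have hnR' : (3:ℝ) ≤ (n:ℝ) := by exact_mod_cast hn
  set s : ℝ := 1/2 - 1/(2*(n:ℝ)) with hs
  have hx0 : 0 < 1/(2*(n:ℝ)) := by positivity
  have hx6 : 1/(2*(n:ℝ)) ≤ 1/6 := by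
    rw [div_le_div_iff₀ (by linarith) (by norm_num)]
    linarith
  have hs0 : 0 < s := by rw [hs]; linarith
  have hs1 : s < 1 := by rw [hs]; linarith
  have hn0 : (n:ℝ) ≠ 0 := by linarith
  have hd : ∀ m : ℕ, d n m = (((n:ℝ) - 1) * (1 / (2*(n:ℝ)))) * (A m / ((m:ℝ) + s)) := by
    intro m
    have h2 : ((m:ℝ) + s) ≠ 0 := by
      have : (0:ℝ) ≤ (m:ℝ) := Nat.cast_nonneg m
      nlinarith
    have hden : (n:ℝ) * (2 * (m:ℝ) + 1) - 1 = (2 * (n:ℝ)) * ((m:ℝ) + s) := by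
      rw [hs]; field_simp; ring
    rw [d, hden]
    rw [div_mul_eq_div_div]
    field_simp
  rw [tsum_congr hd, tsum_mul_left, key_sum hs0 hs1]
  rw [show ((n:ℝ) - 1) * (1 / (2*(n:ℝ))) * (Real.Gamma s * Real.sqrt π / Real.Gamma (s + 1/2))
    = ((n:ℝ) - 1) * ((1 / (2*(n:ℝ))) * (Real.Gamma s * Real.sqrt π / Real.Gamma (s + 1/2))) by ring]
  rw [hs, gamma_tan_identity hn]


end aux

theorem stmt_10 (n : ℕ) (hn : 3 ≤ n) (β : ℝ) :
    f n β 1 = (K n : ℂ) *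
        (((Real.cos (β / 2) * (1 + Real.tan (π / (2 * n))) : ℝ) : ℂ) +
          Complex.I * ((Real.sin (β / 2) * (1 - Real.tan (π / (2 * n))) : ℝ) : ℂ)) ∧
    f n β (Complex.exp (Complex.I * ((π / n : ℝ) : ℂ)))
      = Complex.exp (Complex.I * ((π / n : ℝ) : ℂ)) * (K n : ℂ) *
        (((Real.cos (β / 2) * (1 - Real.tan (π / (2 * n))) : ℝ) : ℂ) +
          Complex.I * ((Real.sin (β / 2) * (1 + Real.tan (π / (2 * n))) : ℝ) : ℂ)) ∧
    ‖f n β 1‖ ^ 2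
      = K n ^ 2 * (1 / Real.cos (π / (2 * n)) ^ 2 + 2 * Real.tan (π / (2 * n)) * Real.cos β) ∧
    ‖f n β (Complex.exp (Complex.I * ((π / n : ℝ) : ℂ)))‖ ^ 2
      = K n ^ 2 * (1 / Real.cos (π / (2 * n)) ^ 2 - 2 * Real.tan (π / (2 * n)) * Real.cos β) := by
  have hn1 : 1 ≤ n := by omega
  have hnR : (3:ℝ) ≤ (n:ℝ) := by exact_mod_cast hn
  have hn0 : (n:ℂ) ≠ 0 := by
    simp only [ne_eq, Nat.cast_eq_zero]
    omega
  have hnne1 : ((n:ℂ) - 1) ≠ 0 := by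
    intro h
    have : (n:ℂ) = 1 := by linear_combination h
    have : (n:ℕ) = 1 := by exact_mod_cast this
    omega
  set z₀ : ℂ := Complex.exp (Complex.I * ((π / n : ℝ) : ℂ)) with hz₀
  set t : ℝ := Real.tan (π / (2 * n)) with ht
  set Kr : ℝ := K n with hKr
  set cb : ℝ := Real.cos (β / 2) with hcb
  set sb : ℝ := Real.sin (β / 2) with hsb
  -- powers of z₀
  have hz2n : z₀ ^ (2 * n) = 1 := by
    rw [hz₀, ← Complex.exp_nat_mul]
    rw [show ((2 * n : ℕ) : ℂ) * (Complex.I * ((π / n : ℝ) : ℂ)) = 2 * π * Complex.I by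
      push_cast
      field_simp]
    exact Complex.exp_two_pi_mul_I
  have hzn1 : z₀ ^ (n - 1) = -Complex.exp (-(Complex.I * ((π / n : ℝ) : ℂ))) := by
    rw [hz₀, ← Complex.exp_nat_mul]
    have e1 : ((n - 1 : ℕ) : ℂ) = (n:ℂ) - 1 := by
      push_cast [Nat.cast_sub hn1]
      ring
    rw [e1]
    have e2 : ((n:ℂ) - 1) * (Complex.I * ((π / n : ℝ) : ℂ))
        = π * Complex.I + -(Complex.I * ((π / n : ℝ) : ℂ)) := by
      push_cast
      field_simp
      ring
    rw [e2, Complex.exp_add, Complex.exp_pi_mul_I]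
    ring
  -- series values
  have hhh1 : hh n 1 = (Kr : ℂ) := by
    rw [hh]
    simp only [one_pow, mul_one]
    rw [← Complex.ofReal_tsum, sum_c hn]
  have hhhz : hh n z₀ = z₀ * (Kr : ℂ) := by
    rw [hh]
    have hpow : ∀ m : ℕ, z₀ ^ (2 * m * n + 1) = z₀ := by
      intro m
      rw [pow_add, pow_one, show 2 * m * n = (2 * n) * m by ring, pow_mul, hz2n, one_pow, one_mul]
    calc ∑' m : ℕ, (c n m : ℂ) * z₀ ^ (2 * m * n + 1) = ∑' m : ℕ, (c n m : ℂ) * z₀ := by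
          exact tsum_congr fun m => by rw [hpow m]
    _ = (∑' m : ℕ, (c n m : ℂ)) * z₀ := tsum_mul_right
    _ = z₀ * (Kr : ℂ) := by rw [← Complex.ofReal_tsum, sum_c hn]; ring
  have hcastn : (((n:ℝ) - 1 : ℝ) : ℂ) = (n:ℂ) - 1 := by push_cast; ring
  have hgg1 : gg n 1 = ((Kr * t : ℝ) : ℂ) := by
    rw [hKr, ht, gg]
    simp only [one_pow, mul_one]
    rw [← Complex.ofReal_tsum, sum_d hn, Complex.ofReal_mul, hcastn]
    field_simp
  have hggz : gg n z₀ = -((Kr * t : ℝ) : ℂ) * Complex.exp (-(Complex.I * ((π / n : ℝ) : ℂ))) := by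
    rw [ht, hKr, gg]
    have hpow : ∀ m : ℕ, z₀ ^ (2 * m * n + n - 1) = z₀ ^ (n - 1) := by
      intro m
      have e : 2 * m * n + n - 1 = (2 * n) * m + (n - 1) := by
        have h2 : 2 * m * n = 2 * n * m := by ring
        omega
      rw [e, pow_add, pow_mul, hz2n, one_pow, one_mul]
    have : ∑' m : ℕ, (d n m : ℂ) * z₀ ^ (2 * m * n + n - 1)
        = (∑' m : ℕ, (d n m : ℂ)) * z₀ ^ (n - 1) := by
      rw [← tsum_mul_right]
      exact tsum_congr fun m => by rw [hpow m]
    rw [this, ← Complex.ofReal_tsum, sum_d hn, hzn1, Complex.ofReal_mul, hcastn]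
    field_simp
    try ring
  -- exponentials
  have hE : Complex.exp (Complex.I * (β:ℂ) / 2) = (cb : ℂ) + (sb : ℂ) * Complex.I := by
    rw [show Complex.I * (β:ℂ) / 2 = ((β/2 : ℝ) : ℂ) * Complex.I by push_cast; ring]
    rw [Complex.exp_mul_I, hcb, hsb, Complex.ofReal_cos, Complex.ofReal_sin]
  have hE' : Complex.exp (-(Complex.I * (β:ℂ) / 2)) = (cb : ℂ) - (sb : ℂ) * Complex.I := by
    rw [show -(Complex.I * (β:ℂ) / 2) = ((-(β/2) : ℝ) : ℂ) * Complex.I by push_cast; ring]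
    rw [Complex.exp_mul_I]
    rw [show ((-(β/2) : ℝ) : ℂ) = -(((β/2) : ℝ) : ℂ) by push_cast; ring]
    rw [Complex.cos_neg, Complex.sin_neg, hcb, hsb, Complex.ofReal_cos, Complex.ofReal_sin]
    ring
  -- the four values
  have hf1 : f n β 1 = (Kr : ℂ) *
      (((cb * (1 + t) : ℝ) : ℂ) + Complex.I * ((sb * (1 - t) : ℝ) : ℂ)) := by
    rw [f, hhh1, hgg1, hE, hE', Complex.conj_ofReal]
    push_cast
    try ring
  have hfz : f n β z₀ = z₀ * (Kr : ℂ) *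
      (((cb * (1 - t) : ℝ) : ℂ) + Complex.I * ((sb * (1 + t) : ℝ) : ℂ)) := by
    rw [f, hhhz, hggz, hE, hE']
    have hconj : (starRingEnd ℂ) (-((Kr * t : ℝ) : ℂ) * Complex.exp (-(Complex.I * ((π / n : ℝ) : ℂ))))
        = -((Kr * t : ℝ) : ℂ) * z₀ := by
      rw [map_mul, map_neg, Complex.conj_ofReal, ← Complex.exp_conj]
      have hc2 : (starRingEnd ℂ) (-(Complex.I * ((π / n : ℝ) : ℂ))) = Complex.I * ((π / n : ℝ) : ℂ) := by
        rw [map_neg, map_mul, Complex.conj_I, Complex.conj_ofReal]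
        ring
      rw [hc2]
    rw [hconj]
    push_cast
    try ring
  -- trig facts
  have hcosne : Real.cos (π / (2 * n)) ≠ 0 := by
    have hpipos := Real.pi_pos
    have h1 : 0 < π / (2 * n) := by positivity
    have h2 : π / (2 * n) < π / 2 := by
      rw [div_lt_div_iff₀ (by linarith) (by norm_num)]
      nlinarith
    exact (Real.cos_pos_of_mem_Ioo ⟨by linarith, h2⟩).ne'
  have htan : t ^ 2 + 1 = 1 / Real.cos (π / (2 * n)) ^ 2 := by
    rw [ht, Real.tan_eq_sin_div_cos]
    field_simp
    try rw [show Real.sin (π / (2*n)) ^ 2 + Real.cos (π / (2*n)) ^ 2 = 1 from Real.sin_sq_add_cos_sq _]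
  have hcb2 : cb ^ 2 + sb ^ 2 = 1 := by
    rw [hcb, hsb, add_comm]
    exact Real.sin_sq_add_cos_sq _
  have hcosβ : Real.cos β = cb ^ 2 - sb ^ 2 := by
    rw [show β = β/2 + β/2 by ring, Real.cos_add, hcb, hsb]
    ring
  have habs1 : ‖f n β 1‖ ^ 2
      = Kr ^ 2 * (1 / Real.cos (π / (2 * n)) ^ 2 + 2 * t * Real.cos β) := by
    rw [hf1, Complex.sq_norm, Complex.normSq_mul, Complex.normSq_ofReal]
    rw [show ((cb * (1 + t) : ℝ) : ℂ) + Complex.I * ((sb * (1 - t) : ℝ) : ℂ)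
      = ((cb * (1 + t) : ℝ) : ℂ) + ((sb * (1 - t) : ℝ) : ℂ) * Complex.I by ring]
    rw [Complex.normSq_add_mul_I]
    linear_combination (Kr^2*(1+t^2))*hcb2 + (-(2*t*Kr^2))*hcosβ + (Kr^2)*htan
  have habsz : ‖f n β z₀‖ ^ 2
      = Kr ^ 2 * (1 / Real.cos (π / (2 * n)) ^ 2 - 2 * t * Real.cos β) := by
    rw [hfz, norm_mul, norm_mul, mul_pow, mul_pow]
    have hz₀abs : ‖z₀‖ = 1 := by
      rw [hz₀, Complex.norm_exp]
      simp
    rw [hz₀abs, one_pow, one_mul]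
    rw [Complex.sq_norm, Complex.sq_norm, Complex.normSq_ofReal]
    rw [show ((cb * (1 - t) : ℝ) : ℂ) + Complex.I * ((sb * (1 + t) : ℝ) : ℂ)
      = ((cb * (1 - t) : ℝ) : ℂ) + ((sb * (1 + t) : ℝ) : ℂ) * Complex.I by ring]
    rw [Complex.normSq_add_mul_I]
    linear_combination (Kr^2*(1+t^2))*hcb2 + (2*t*Kr^2)*hcosβ + (Kr^2)*htan
  exact ⟨hf1, hfz, habs1, habsz⟩
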